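/- The family of all trees over ω containing a Mathias tree, regarded as a subset of the Polish space Tree_ω, is Σ¹₁-complete: it is analytic, and for every Polish space Y and every analytic set B ⊆ Y there is a Borel measurable function f : Y → Tree_ω whose preimage of this family equals B. -/

import Mathlib

open MeasureTheory

/-- The Polish space `Tree_ω` of all trees over `ω`. -/
abbrev TreeOmega : Type :=
  {x : List ℕ → Bool // ∀ σ τ : List ℕ, x σ = true → τ <+: σ → x τ = true}

/-- `M(B)`: the set of strictly increasing finite sequences with entries in `B`
(a Mathias bush). -/
def MB (B : Set ℕ) : Set (List ℕ) :=
  {σ | (∀ n ∈ σ, n ∈ B) ∧ σ.Pairwise (· < ·)}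

/-- `S ⊆ ω^{<ω}` is a tree: closed under initial segments. -/
def IsTreeSet (S : Set (List ℕ)) : Prop :=
  ∀ σ ∈ S, ∀ τ : List ℕ, τ <+: σ → τ ∈ S

/-- A Mathias tree: a tree `S` such that for some `σ ∈ S`, the tree
`S_σ = { τ : σ ⌢ τ ∈ S }` is a Mathias bush `M(B)` for some infinite `B`. -/
def IsMathiasTree (S : Set (List ℕ)) : Prop :=
  IsTreeSet S ∧ ∃ σ ∈ S, ∃ B : Set ℕ, B.Infinite ∧ {τ : List ℕ | σ ++ τ ∈ S} = MB B

/-- The family of all trees over `ω` containing a Mathias tree. -/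
def mathiasFam : Set TreeOmega :=
  {T | ∃ S : Set (List ℕ), IsMathiasTree S ∧ S ⊆ {σ | T.1 σ = true}}

namespace MathiasAux


/-- decoding of naturals to lists -/
def node (n : ℕ) : List ℕ := Denumerable.ofNat (List ℕ) n

lemma node_encode (s : List ℕ) : node (Encodable.encode s) = s := by
  simp [node]

/-- strict prefix -/
def SP (a b : List ℕ) : Prop := a <+: b ∧ a.length < b.length

instance : IsTrans (List ℕ) SP :=
  ⟨fun _ _ _ h1 h2 => ⟨h1.1.trans h2.1, h1.2.trans h2.2⟩⟩

def listOf (x : ℕ → ℕ) (n : ℕ) : List ℕ := (List.range n).map x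

@[simp] lemma listOf_length (x : ℕ → ℕ) (n : ℕ) : (listOf x n).length = n := by
  simp [listOf]

lemma listOf_take (x : ℕ → ℕ) (m n : ℕ) :
    (listOf x n).take m = listOf x (min m n) := by
  simp [listOf, ← List.map_take, List.take_range]

lemma listOf_prefix (x : ℕ → ℕ) {m n : ℕ} (h : m ≤ n) :
    listOf x m <+: listOf x n := by
  have := List.take_prefix m (listOf x n)
  rwa [listOf_take, min_eq_left h] at this

lemma listOf_injective (x : ℕ → ℕ) : Function.Injective (listOf x) := by
  intro m n h
  have := congrArg List.length h
  simpa using this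

lemma nil_mem_MB (B : Set ℕ) : ([] : List ℕ) ∈ MB B := ⟨by simp, List.Pairwise.nil⟩

lemma MB_prefix {B : Set ℕ} {s t : List ℕ} (hs : s ∈ MB B) (h : t <+: s) : t ∈ MB B :=
  ⟨fun n hn => hs.1 n (h.sublist.subset hn), hs.2.sublist h.sublist⟩

lemma mem_mathiasFam_iff (T : TreeOmega) :
    T ∈ mathiasFam ↔
      ∃ σ : List ℕ, ∃ B : Set ℕ, B.Infinite ∧ ∀ τ ∈ MB B, T.1 (σ ++ τ) = true := by
  constructor
  · rintro ⟨S, ⟨-, σ, -, B, hBinf, hEq⟩, hsub⟩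
    refine ⟨σ, B, hBinf, fun τ hτ => ?_⟩
    have : τ ∈ {τ : List ℕ | σ ++ τ ∈ S} := hEq ▸ hτ
    exact hsub this
  · rintro ⟨σ, B, hBinf, h⟩
    refine ⟨{ρ | ρ <+: σ} ∪ (fun τ => σ ++ τ) '' MB B, ⟨?_, σ, Or.inl List.prefix_rfl, B, hBinf, ?_⟩, ?_⟩
    · rintro ρ (hρ | ⟨τ, hτ, rfl⟩) t ht
      · exact Or.inl (ht.trans hρ)
      · by_cases hlen : t.length ≤ σ.length
        · exact Or.inl (List.prefix_of_prefix_length_le ht (List.prefix_append σ τ) hlen)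
        · have hσt : σ <+: t :=
            List.prefix_of_prefix_length_le (List.prefix_append σ τ) ht (le_of_not_ge hlen)
          obtain ⟨u, rfl⟩ := hσt
          have : u <+: τ := (List.prefix_append_right_inj σ).1 ht
          exact Or.inr ⟨u, MB_prefix hτ this, rfl⟩
    · ext τ
      simp only [Set.mem_setOf_eq, Set.mem_union, Set.mem_image]
      constructor
      · rintro (hpre | ⟨τ', hτ', heq⟩)
        · have : τ = [] := by
            have := hpre.length_le
            simp only [List.length_append] at this
            have : τ.length = 0 := by omega
            exact List.length_eq_zero_iff.1 this
          subst this; exact nil_mem_MB B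
        · have : τ' = τ := List.append_cancel_left heq
          subst this; exact hτ'
      · intro hτ; exact Or.inr ⟨τ, hτ, rfl⟩
    · rintro ρ (hρ | ⟨τ, hτ, rfl⟩)
      · have hσ : T.1 σ = true := by simpa using h [] (nil_mem_MB B)
        exact T.2 σ ρ hσ hρ
      · exact h τ hτ



lemma isClosed_treeSet :
    IsClosed {x : List ℕ → Bool | ∀ σ τ : List ℕ, x σ = true → τ <+: σ → x τ = true} := by
  have : {x : List ℕ → Bool | ∀ σ τ : List ℕ, x σ = true → τ <+: σ → x τ = true} =
      ⋂ (σ : List ℕ) (τ : List ℕ) (_ : τ <+: σ),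
        {x : List ℕ → Bool | x σ = true → x τ = true} := by
    ext x; simp only [Set.mem_iInter, Set.mem_setOf_eq]; tauto
  rw [this]
  refine isClosed_iInter fun σ => isClosed_iInter fun τ => isClosed_iInter fun _ => ?_
  have h1 : IsClosed {x : List ℕ → Bool | x σ = true}ᶜ := by
    have : Continuous fun x : List ℕ → Bool => x σ := continuous_apply σ
    exact (IsOpen.isClosed_compl (by
      exact (isOpen_discrete {true}).preimage this))
  have h2 : IsClosed {x : List ℕ → Bool | x τ = true} := by
    have : Continuous fun x : List ℕ → Bool => x τ := continuous_apply τ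
    exact (isClosed_discrete {true}).preimage this
  have : {x : List ℕ → Bool | x σ = true → x τ = true} =
      {x : List ℕ → Bool | x σ = true}ᶜ ∪ {x : List ℕ → Bool | x τ = true} := by
    ext x; simp only [Set.mem_union, Set.mem_compl_iff, Set.mem_setOf_eq]; tauto
  rw [this]
  exact h1.union h2

instance instPolishListNatBool : PolishSpace (List ℕ → Bool) := by
  haveI : TopologicalSpace.SeparableSpace (List ℕ → Bool) := inferInstance
  haveI : TopologicalSpace.IsCompletelyMetrizableSpace (List ℕ → Bool) := inferInstance
  infer_instance

instance instPolishNatBool : PolishSpace (ℕ → Bool) := by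
  haveI : TopologicalSpace.SeparableSpace (ℕ → Bool) := inferInstance
  haveI : TopologicalSpace.IsCompletelyMetrizableSpace (ℕ → Bool) := inferInstance
  infer_instance

instance : PolishSpace TreeOmega := isClosed_treeSet.polishSpace

instance : BorelSpace TreeOmega := Subtype.borelSpace _
example : MeasurableSpace TreeOmega := inferInstance
example : MeasurableSpace TreeOmega := inferInstance
example : PolishSpace (TreeOmega × (ℕ → Bool)) := inferInstance
example : BorelSpace (TreeOmega × (ℕ → Bool)) := inferInstance



def Wset (σ : List ℕ) : Set (TreeOmega × (ℕ → Bool)) :=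
  {p | {n | p.2 n = true}.Infinite ∧ ∀ τ ∈ MB {n | p.2 n = true}, p.1.1 (σ ++ τ) = true}

lemma measurableSet_fstTrue (s : List ℕ) :
    MeasurableSet {p : TreeOmega × (ℕ → Bool) | p.1.1 s = true} := by
  have h : Measurable fun p : TreeOmega × (ℕ → Bool) => p.1.1 s :=
    (measurable_pi_apply s).comp (measurable_subtype_coe.comp measurable_fst)
  exact h (MeasurableSet.singleton true)

lemma measurableSet_sndTrue (n : ℕ) :
    MeasurableSet {p : TreeOmega × (ℕ → Bool) | p.2 n = true} := by
  have h : Measurable fun p : TreeOmega × (ℕ → Bool) => p.2 n :=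
    (measurable_pi_apply n).comp measurable_snd
  exact h (MeasurableSet.singleton true)

lemma measurableSet_W (σ : List ℕ) : MeasurableSet (Wset σ) := by
  have h1 : MeasurableSet {p : TreeOmega × (ℕ → Bool) | {n | p.2 n = true}.Infinite} := by
    have heq : {p : TreeOmega × (ℕ → Bool) | {n | p.2 n = true}.Infinite} =
        ⋂ N : ℕ, ⋃ n : ℕ, {p : TreeOmega × (ℕ → Bool) | N < n} ∩ {p | p.2 n = true} := by
      ext p
      simp only [Set.mem_setOf_eq, Set.mem_iInter, Set.mem_iUnion, Set.mem_inter_iff]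
      constructor
      · intro hinf N
        obtain ⟨b, hb, hNb⟩ := hinf.exists_gt N
        exact ⟨b, hNb, hb⟩
      · intro h
        apply Set.infinite_of_forall_exists_gt
        intro a
        obtain ⟨n, han, hn⟩ := h a
        exact ⟨n, hn, han⟩
    rw [heq]
    exact MeasurableSet.iInter fun N => MeasurableSet.iUnion fun n =>
      (MeasurableSet.const _).inter (measurableSet_sndTrue n)
  have h2 : MeasurableSet {p : TreeOmega × (ℕ → Bool) |
      ∀ τ ∈ MB {n | p.2 n = true}, p.1.1 (σ ++ τ) = true} := by
    have heq : {p : TreeOmega × (ℕ → Bool) | ∀ τ ∈ MB {n | p.2 n = true}, p.1.1 (σ ++ τ) = true}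
        = ⋂ τ : List ℕ,
            (((⋂ n ∈ τ, {p : TreeOmega × (ℕ → Bool) | p.2 n = true}) ∩
              {p : TreeOmega × (ℕ → Bool) | τ.Pairwise (· < ·)})ᶜ ∪
            {p : TreeOmega × (ℕ → Bool) | p.1.1 (σ ++ τ) = true}) := by
      ext p
      simp only [Set.mem_setOf_eq, Set.mem_iInter, Set.mem_union, Set.mem_compl_iff,
        Set.mem_inter_iff, MB, not_and]
      constructor
      · intro h τ
        by_cases hmem : (∀ n ∈ τ, p.2 n = true) ∧ τ.Pairwise (· < ·)
        · exact Or.inr (h τ ⟨hmem.1, hmem.2⟩)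
        · left
          intro hall hsort
          exact absurd ⟨hall, hsort⟩ hmem
      · intro h τ hτ
        rcases h τ with hbad | hgood
        · exact absurd hτ.2 (hbad hτ.1)
        · exact hgood
    rw [heq]
    refine MeasurableSet.iInter fun τ => MeasurableSet.union (MeasurableSet.compl ?_)
      (measurableSet_fstTrue _)
    exact ((MeasurableSet.biInter (Set.to_countable _)
      fun n _ => measurableSet_sndTrue n).inter (MeasurableSet.const _))
  exact h1.inter h2

lemma analyticSet_mathiasFam : AnalyticSet mathiasFam := by
  classical
  have heq : mathiasFam = ⋃ σ : List ℕ, Prod.fst '' Wset σ := by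
    ext T
    rw [mem_mathiasFam_iff]
    simp only [Set.mem_iUnion, Set.mem_image]
    constructor
    · rintro ⟨σ, B, hBinf, h⟩
      refine ⟨σ, ⟨T, fun n => decide (n ∈ B)⟩, ⟨?_, ?_⟩, rfl⟩
      · have : {n | (decide (n ∈ B)) = true} = B := by ext n; simp
        rw [this]; exact hBinf
      · have : {n | (decide (n ∈ B)) = true} = B := by ext n; simp
        rw [this]; exact h
    · rintro ⟨σ, ⟨p, ⟨hinf, h⟩, rfl⟩⟩
      exact ⟨σ, {n | p.2 n = true}, hinf, h⟩
  rw [heq]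
  exact AnalyticSet.iUnion fun σ =>
    ((measurableSet_W σ).analyticSet).image_of_continuous continuous_fst



variable {Y : Type} [TopologicalSpace Y]

/-- the cylinder determined by a finite sequence -/
def cylList (s : List ℕ) : Set (ℕ → ℕ) := {z | listOf z s.length = s}

lemma cylList_listOf (x : ℕ → ℕ) (n : ℕ) : cylList (listOf x n) = PiNat.cylinder x n := by
  ext z
  simp only [cylList, Set.mem_setOf_eq, listOf_length, PiNat.mem_cylinder_iff]
  constructor
  · intro h i hi
    have := congrArg (fun l => l.getD i 0) h
    simpa [listOf, List.getD_eq_getElem?_getD, hi] using this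
  · intro h
    simp only [listOf]
    exact List.map_congr_left (by simpa using fun i hi => h i hi)

lemma cylList_anti {s t : List ℕ} (h : t <+: s) : cylList s ⊆ cylList t := by
  intro z hz
  have hlen : t.length ≤ s.length := h.length_le
  have : listOf z t.length = (listOf z s.length).take t.length := by
    rw [listOf_take, min_eq_left hlen]
  rw [cylList, Set.mem_setOf_eq, this, hz]
  exact (List.prefix_iff_eq_take.1 h).symm

def Dset (f : (ℕ → ℕ) → Y) (s : List ℕ) : Set Y := closure (f '' cylList s)

lemma isClosed_Dset (f : (ℕ → ℕ) → Y) (s : List ℕ) : IsClosed (Dset f s) := isClosed_closure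

lemma Dset_anti (f : (ℕ → ℕ) → Y) {s t : List ℕ} (h : t <+: s) : Dset f s ⊆ Dset f t :=
  closure_mono (Set.image_mono (cylList_anti h))

lemma mem_Dset_self (f : (ℕ → ℕ) → Y) (x : ℕ → ℕ) (n : ℕ) : f x ∈ Dset f (listOf x n) := by
  apply subset_closure
  exact ⟨x, by simp [cylList], rfl⟩

/-- branch through the derived tree determines the point -/
lemma branch_eq {Y : Type} [MetricSpace Y] (f : (ℕ → ℕ) → Y) (hf : Continuous f)
    (x : ℕ → ℕ) (y : Y) (h : ∀ n, y ∈ Dset f (listOf x n)) : y = f x := by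
  by_contra hne
  have hδ : 0 < dist y (f x) := dist_pos.2 hne
  set δ := dist y (f x) with hδdef
  have hopen : IsOpen (f ⁻¹' Metric.ball (f x) (δ / 2)) := Metric.isOpen_ball.preimage hf
  have hx : x ∈ f ⁻¹' Metric.ball (f x) (δ / 2) := by
    simp [Metric.mem_ball, hδ, half_pos hδ]
  obtain ⟨v, ⟨z, n, rfl⟩, hxv, hvU⟩ :=
    (PiNat.isTopologicalBasis_cylinders (fun _ : ℕ => ℕ)).exists_subset_of_mem_open hx hopen
  have hcyl : PiNat.cylinder x n = PiNat.cylinder z n := PiNat.mem_cylinder_iff_eq.1 hxv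
  have hsub : f '' cylList (listOf x n) ⊆ Metric.ball (f x) (δ / 2) := by
    rw [cylList_listOf, hcyl]
    exact Set.image_subset_iff.2 hvU
  have hy := h n
  rw [Dset, Metric.mem_closure_iff] at hy
  obtain ⟨b, hb, hdb⟩ := hy (δ / 2) (half_pos hδ)
  have hbx : dist b (f x) < δ / 2 := hsub hb
  have : dist y (f x) < δ := by
    calc dist y (f x) ≤ dist y b + dist b (f x) := dist_triangle _ _ _
      _ < δ / 2 + δ / 2 := by exact add_lt_add hdb hbx
      _ = δ := add_halves δ
  exact absurd this (by simp [hδdef])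

/-- the reduction tree -/
noncomputable def gfun (f : (ℕ → ℕ) → Y) (y : Y) (s : List ℕ) : Bool :=
  @decide (List.Chain' (· < ·) s ∧ List.Chain' SP (s.map node) ∧
    ∀ n ∈ s, y ∈ Dset f (node n)) (Classical.propDecidable _)

lemma gfun_eq_true_iff (f : (ℕ → ℕ) → Y) (y : Y) (s : List ℕ) :
    gfun f y s = true ↔ (List.Chain' (· < ·) s ∧ List.Chain' SP (s.map node) ∧
      ∀ n ∈ s, y ∈ Dset f (node n)) := by
  simp [gfun]

lemma gfun_tree (f : (ℕ → ℕ) → Y) (y : Y) :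
    ∀ σ τ : List ℕ, gfun f y σ = true → τ <+: σ → gfun f y τ = true := by
  intro σ τ hσ hpre
  rw [gfun_eq_true_iff] at hσ ⊢
  obtain ⟨h1, h2, h3⟩ := hσ
  exact ⟨h1.sublist hpre.sublist, h2.sublist (hpre.sublist.map node),
    fun n hn => h3 n (hpre.sublist.subset hn)⟩

noncomputable def gY (f : (ℕ → ℕ) → Y) (y : Y) : TreeOmega := ⟨gfun f y, gfun_tree f y⟩

lemma measurable_gY [MeasurableSpace Y] [BorelSpace Y] (f : (ℕ → ℕ) → Y) :
    Measurable (gY f) := by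
  apply Measurable.subtype_mk
  rw [measurable_pi_iff]
  intro s
  apply measurable_to_countable
  intro b
  have hset : MeasurableSet {y : Y | gfun f y s = true} := by
    by_cases hs : List.Chain' (· < ·) s ∧ List.Chain' SP (s.map node)
    · have : {y : Y | gfun f y s = true} = ⋂ n ∈ s, Dset f (node n) := by
        ext y
        simp only [Set.mem_setOf_eq, gfun_eq_true_iff, Set.mem_iInter]
        tauto
      rw [this]
      exact MeasurableSet.biInter (Set.to_countable _)
        fun n _ => (isClosed_Dset f (node n)).measurableSet
    · have : {y : Y | gfun f y s = true} = ∅ := by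
        ext y
        simp only [Set.mem_setOf_eq, gfun_eq_true_iff, Set.mem_empty_iff_false, iff_false]
        tauto
      rw [this]; exact MeasurableSet.empty
  cases hb : gfun f (b) s
  · have : (fun y => gfun f y s) ⁻¹' {false} = {y : Y | gfun f y s = true}ᶜ := by
      ext y
      simp only [Set.mem_preimage, Set.mem_singleton_iff, Set.mem_compl_iff,
        Set.mem_setOf_eq]
      cases h : gfun f y s <;> simp
    rw [this]; exact hset.compl
  · have : (fun y => gfun f y s) ⁻¹' {true} = {y : Y | gfun f y s = true} := by
      ext y
      simp
    rw [this]; exact hset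

lemma chain_rel {α : Type*} (R : α → α → Prop) [IsTrans α R] (L : ℕ → α)
    (h : ∀ k, R (L k) (L (k + 1))) : ∀ i j, i < j → R (L i) (L j) := by
  intro i j hij
  induction j with
  | zero => omega
  | succ j ih =>
    rcases Nat.lt_succ_iff_lt_or_eq.1 hij with h' | h'
    · exact _root_.trans (ih h') (h j)
    · subst h'; exact h i

lemma forward (f : (ℕ → ℕ) → Y) {y : Y} (x : ℕ → ℕ) (hfx : f x = y) :
    gY f y ∈ mathiasFam := by
  have hb : ∀ n, y ∈ Dset f (listOf x n) := fun n => hfx ▸ mem_Dset_self f x n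
  set c : ℕ → ℕ := fun n => Encodable.encode (listOf x n) with hc
  have hcinj : Function.Injective c := fun m n h =>
    listOf_injective x (Encodable.encode_injective h)
  have exists_big : ∀ k N : ℕ, ∃ n, k < n ∧ N < c n := by
    intro k N
    have hfin : ({n | c n ≤ N} ∪ {n | n ≤ k}).Finite := by
      apply Set.Finite.union
      · exact Set.Finite.preimage (Set.injOn_of_injective hcinj) (Set.finite_Iic N)
      · exact Set.finite_Iic k
    obtain ⟨n, hn⟩ := hfin.infinite_compl.nonempty
    simp only [Set.mem_compl_iff, Set.mem_union, Set.mem_setOf_eq, not_or, not_le] at hn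
    exact ⟨n, hn.2, hn.1⟩
  set F : ℕ → ℕ := fun j => (exists_big j (c j)).choose with hF
  have hF1 : ∀ j, j < F j := fun j => (exists_big j (c j)).choose_spec.1
  have hF2 : ∀ j, c j < c (F j) := fun j => (exists_big j (c j)).choose_spec.2
  set m : ℕ → ℕ := fun k => F^[k] 0 with hm
  have hmsucc : ∀ k, m (k + 1) = F (m k) := fun k => Function.iterate_succ_apply' F k 0
  have hmono : StrictMono m := strictMono_nat_of_lt_succ fun k => by
    rw [hmsucc]; exact hF1 (m k)
  have hcmono : StrictMono fun k => c (m k) := strictMono_nat_of_lt_succ fun k => by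
    rw [hmsucc]; exact hF2 (m k)
  set B : Set ℕ := Set.range fun k => c (m k) with hB
  have hBinf : B.Infinite := Set.infinite_range_of_injective hcmono.injective
  have hnode : ∀ k, node (c (m k)) = listOf x (m k) := fun k => node_encode _
  rw [mem_mathiasFam_iff]
  refine ⟨[], B, hBinf, fun τ hτ => ?_⟩
  obtain ⟨hmem, hsort⟩ := hτ
  rw [List.nil_append]
  show gfun f y τ = true
  rw [gfun_eq_true_iff]
  refine ⟨hsort.isChain, ?_, ?_⟩
  · unfold List.Chain'
    rw [List.isChain_map]
    apply List.Pairwise.isChain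
    have hsort' : τ.Pairwise fun a b => a ∈ B ∧ b ∈ B ∧ a < b := by
      apply List.pairwise_iff_forall_sublist.2
      intro a b hab
      have hmemsub := hab.subset
      refine ⟨hmem a (hmemsub (by simp)), hmem b (hmemsub (by simp)), ?_⟩
      exact (List.pairwise_iff_forall_sublist.1 hsort) hab
    apply hsort'.imp
    rintro a b ⟨⟨i, rfl⟩, ⟨j, rfl⟩, hab⟩
    have hij : i < j := hcmono.lt_iff_lt.1 hab
    rw [hnode i, hnode j]
    exact ⟨listOf_prefix x (hmono hij).le, by simpa using hmono hij⟩
  · intro n hn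
    obtain ⟨k, rfl⟩ := hmem n hn
    rw [hnode k]
    exact hb (m k)

lemma backward {Y : Type} [MetricSpace Y] (f : (ℕ → ℕ) → Y) (hf : Continuous f) (y : Y)
    (h : gY f y ∈ mathiasFam) : y ∈ Set.range f := by
  obtain ⟨σ, B, hBinf, hall⟩ := (mem_mathiasFam_iff _).1 h
  have hp : {n | n ∈ B}.Infinite := by simpa using hBinf
  set e : ℕ → ℕ := Nat.nth (· ∈ B) with he
  have hemem : ∀ k, e k ∈ B := fun k => Nat.nth_mem_of_infinite hp k
  have hemono : StrictMono e := Nat.nth_strictMono hp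
  set L : ℕ → List ℕ := fun k => node (e k) with hL
  have hgfun : ∀ τ ∈ MB B, gfun f y (σ ++ τ) = true := hall
  have hDL : ∀ k, y ∈ Dset f (L k) := by
    intro k
    have hτ : [e k] ∈ MB B := ⟨by simpa using hemem k, List.pairwise_singleton _ _⟩
    have := (gfun_eq_true_iff f y _).1 (hgfun _ hτ)
    exact this.2.2 (e k) (by simp)
  have hSP : ∀ k, SP (L k) (L (k + 1)) := by
    intro k
    have hlt : e k < e (k + 1) := hemono (Nat.lt_succ_self k)
    have hτ : [e k, e (k + 1)] ∈ MB B := by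
      refine ⟨?_, ?_⟩
      · intro n hn
        rcases List.mem_pair.1 hn with rfl | rfl
        exacts [hemem k, hemem (k + 1)]
      · simp [hlt]
    have hchain := ((gfun_eq_true_iff f y _).1 (hgfun _ hτ)).2.1
    rw [List.map_append] at hchain
    have hsub : List.Sublist [L k, L (k + 1)] (σ.map node ++ [e k, e (k + 1)].map node) := by
      apply List.sublist_append_right
    have := hchain.sublist hsub
    exact List.isChain_pair.1 this
  have hchain2 : ∀ i j, i < j → SP (L i) (L j) := chain_rel SP L hSP
  have hpre : ∀ i j, i ≤ j → L i <+: L j := by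
    intro i j hij
    rcases eq_or_lt_of_le hij with rfl | h'
    · exact List.prefix_rfl
    · exact (hchain2 i j h').1
  have hlenmono : StrictMono fun k => (L k).length :=
    strictMono_nat_of_lt_succ fun k => (hSP k).2
  have hlen : ∀ k, k ≤ (L k).length := fun k => hlenmono.le_apply
  set x : ℕ → ℕ := fun i => (L (i + 1)).getD i 0 with hx
  have key : ∀ n, listOf x n = (L n).take n := by
    intro n
    apply List.ext_getElem
    · simp [min_eq_left (hlen n)]
    · intro i hi1 hi2
      simp only [listOf_length] at hi1
      have hiL : i < (L (i + 1)).length := lt_of_lt_of_le (Nat.lt_succ_self i) (hlen (i + 1))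
      have hgd : x i = (L (i + 1))[i] := by
        simp [hx, List.getD_eq_getElem?_getD, hiL]
      have h1 : (listOf x n)[i] = x i := by
        simp [listOf]
      have hiLn : i < (L n).length := by
        have := List.length_take (i := n) (l := L n)
        simp only [List.length_take] at hi2
        omega
      have h2 : ((L n).take n)[i] = (L n)[i]'hiLn := List.getElem_take
      rw [h1, h2, hgd]
      have hpre' : L (i + 1) <+: L n := hpre (i + 1) n (by omega)
      exact List.IsPrefix.getElem hpre' hiL
  have hbranch : ∀ n, y ∈ Dset f (listOf x n) := by
    intro n
    rw [key n]
    exact Dset_anti f (List.take_prefix n (L n)) (hDL n)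
  exact ⟨x, (branch_eq f hf x y hbranch).symm⟩


end MathiasAux

/-- The family of trees containing a Mathias tree is `Σ¹₁`-complete: it is analytic,
and every analytic subset of every Polish space Borel-reduces to it. -/
theorem mathiasFam_analytic_complete :
    AnalyticSet mathiasFam ∧
      ∀ (Y : Type) [TopologicalSpace Y] [PolishSpace Y]
        [MeasurableSpace Y] [BorelSpace Y] (B : Set Y),
        AnalyticSet B →
          ∃ f : Y → TreeOmega, Measurable f ∧ f ⁻¹' mathiasFam = B := by
  constructor
  · exact MathiasAux.analyticSet_mathiasFam
  · intro Y _ _ _ _ B hB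
    rw [AnalyticSet] at hB
    rcases hB with hB | ⟨f, hf, rfl⟩
    · refine ⟨fun _ => ⟨fun _ => false, fun σ τ h _ => by simp at h⟩, measurable_const, ?_⟩
      rw [hB]
      ext y
      simp only [Set.mem_preimage, Set.mem_empty_iff_false, iff_false]
      rintro ⟨S, ⟨-, σ, hσ, -⟩, hsub⟩
      simpa using hsub hσ
    · letI := TopologicalSpace.upgradeIsCompletelyMetrizable Y
      refine ⟨MathiasAux.gY f, MathiasAux.measurable_gY f, ?_⟩
      ext y
      simp only [Set.mem_preimage, Set.mem_range]
      constructor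
      · intro h
        exact MathiasAux.backward f hf y h
      · rintro ⟨x, hx⟩
        exact MathiasAux.forward f x hx
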